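/- The contraction rewriting on coloring strings is confluent; more precisely, for every coloring string S, the invariant inv(S) is well-defined: if S′₁ and S′₂ are each obtained from S by a single contraction operation, then inv(S′₁) = inv(S′₂), so the value of inv(S) does not depend on the order in which contractions are applied. Equivalently, if S can be reduced by sequences of contractions to strings T₁ and T₂ to each of which no contraction applies, then either T₁ = T₂ or both T₁ and T₂ have length at most 2. -/

import Mathlib

/-- A coloring string: a string over the alphabet `{1,2,3}` (modeled as `Fin 3`)
in which consecutive characters are distinct; it encodes a proper 3-coloring of
a path. -/
def IsColoringString (S : List (Fin 3)) : Prop := S.Chain' (· ≠ ·)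

/-- Two coloring strings are adjacent: one is obtained from the other by
exchanging a swappable pair of consecutive characters (i.e. the exchange yields
again a coloring string). -/
def StringStep (S S' : List (Fin 3)) : Prop :=
  IsColoringString S ∧ IsColoringString S' ∧
    ∃ (A B : List (Fin 3)) (a b : Fin 3),
      S = A ++ a :: b :: B ∧ S' = A ++ b :: a :: B

/-- Two coloring strings are reconfigurable: they are joined by a sequence of
coloring strings in which consecutive strings are adjacent. -/
def StringReconf : List (Fin 3) → List (Fin 3) → Prop :=
  Relation.ReflTransGen StringStep

/-- The contraction operations on coloring strings:
`C1` replaces a substring `x p q x` by `x` (here the occurrence starts at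
1-based position `i - 1` with `2 ≤ i ≤ n - 2`, i.e. `A` is an arbitrary prefix
and `B` an arbitrary suffix); `C2` deletes a pairwise-distinct first triple;
`C3` deletes a pairwise-distinct last triple. -/
inductive Contract : List (Fin 3) → List (Fin 3) → Prop
  | c1 (A B : List (Fin 3)) (x p q : Fin 3) :
      Contract (A ++ x :: p :: q :: x :: B) (A ++ x :: B)
  | c2 (p q r : Fin 3) (B : List (Fin 3)) :
      p ≠ q → q ≠ r → p ≠ r → Contract (p :: q :: r :: B) B
  | c3 (A : List (Fin 3)) (p q r : Fin 3) :
      p ≠ q → q ≠ r → p ≠ r → Contract (A ++ [p, q, r]) A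

/-- `S` reduces to `T` by a (possibly empty) sequence of contractions. -/
def ContractsTo : List (Fin 3) → List (Fin 3) → Prop :=
  Relation.ReflTransGen Contract

/-- No contraction applies to `T`. -/
def IsContractNormal (T : List (Fin 3)) : Prop := ∀ U, ¬ Contract T U

/-- `T` is the invariant `inv S` of the coloring string `S`: `S` reduces by
contractions to some string `U` to which no contraction applies, and `T = U`
if `|U| ≥ 3`, while `T` is the empty string `NIL` if `|U| ≤ 2`. -/
def InvIs (S T : List (Fin 3)) : Prop :=
  ∃ U, ContractsTo S U ∧ IsContractNormal U ∧ T = if U.length ≤ 2 then [] else U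

lemma contract_length {S T : List (Fin 3)} (h : Contract S T) : T.length + 3 = S.length := by
  cases h with
  | c1 A B x p q => simp; omega
  | c2 p q r B _ _ _ => simp
  | c3 A p q r _ _ _ => simp

lemma contract_coloring {S T : List (Fin 3)} (h : Contract S T) (hS : IsColoringString S) :
    IsColoringString T := by
  cases h with
  | c1 A B x p q =>
      have h1 : IsColoringString (A ++ [x]) := hS.prefix ⟨p::q::x::B, by simp⟩
      have h2 : IsColoringString (x :: B) := hS.suffix ⟨A ++ [x,p,q], by simp⟩
      unfold IsColoringString at *
      rw [show A ++ x :: B = (A ++ [x]) ++ B by simp] 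
      rcases B with _ | ⟨b, B⟩
      · simpa using h1
      · apply List.IsChain.append h1 (h2.suffix ⟨[x], rfl⟩)
        intro y hy z hz
        simp at hy hz
        subst hy hz
        exact (List.isChain_cons_cons.1 h2).1
  | c2 p q r B _ _ _ => exact hS.suffix ⟨[p,q,r], rfl⟩
  | c3 A p q r _ _ _ => exact hS.prefix ⟨[p,q,r], rfl⟩

lemma normal_of_short {T : List (Fin 3)} (h : T.length ≤ 2) : IsContractNormal T := by
  intro U hU
  have := contract_length hU
  omega

lemma normal_reach {S T : List (Fin 3)} (h : ContractsTo S T) (hS : IsContractNormal S) :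
    T = S := by
  rcases h.cases_head with h | ⟨c, hc, _⟩
  · exact h.symm
  · exact absurd hc (hS c)

lemma exists_normal (S : List (Fin 3)) : ∃ T, ContractsTo S T ∧ IsContractNormal T := by
  by_cases h : ∃ U, Contract S U
  · obtain ⟨U, hU⟩ := h
    have : U.length + 3 = S.length := contract_length hU
    obtain ⟨T, hT, hTn⟩ := exists_normal U
    exact ⟨T, Relation.ReflTransGen.head hU hT, hTn⟩
  · exact ⟨S, Relation.ReflTransGen.refl, fun U hU => h ⟨U, hU⟩⟩
termination_by S.length
decreasing_by omega

lemma contract_inv {S T : List (Fin 3)} (h : Contract S T) :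
    (∃ A B x p q, S = A ++ x :: p :: q :: x :: B ∧ T = A ++ x :: B) ∨
    (∃ p q r B, p ≠ q ∧ q ≠ r ∧ p ≠ r ∧ S = p :: q :: r :: B ∧ T = B) ∨
    (∃ A p q r, p ≠ q ∧ q ≠ r ∧ p ≠ r ∧ S = A ++ [p, q, r] ∧ T = A) := by
  cases h with
  | c1 A B x p q => exact Or.inl ⟨A, B, x, p, q, rfl, rfl⟩
  | c2 p q r B h1 h2 h3 => exact Or.inr (Or.inl ⟨p, q, r, T, h1, h2, h3, rfl, rfl⟩)
  | c3 A p q r h1 h2 h3 => exact Or.inr (Or.inr ⟨T, p, q, r, h1, h2, h3, rfl, rfl⟩)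

lemma fin3_pigeon {x p a q : Fin 3} (hxp : x ≠ p) (hax : a ≠ x) (hap : a ≠ p)
    (hqx : q ≠ x) (hqp : q ≠ p) : a = q := by revert x p a q; decide

lemma occ_ne {A B : List (Fin 3)} {x p q : Fin 3}
    (hS : IsColoringString (A ++ x :: p :: q :: x :: B)) : x ≠ p ∧ p ≠ q ∧ q ≠ x := by
  have h : List.Chain' (· ≠ ·) [x, p, q, x] :=
    List.IsChain.infix hS ⟨A, B, by simp⟩
  simp [List.Chain', List.isChain_cons_cons] at h
  tauto

def Concl (T₁ T₂ : List (Fin 3)) : Prop :=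
  T₁ = T₂ ∨ (∃ U, Contract T₁ U ∧ Contract T₂ U) ∨ (T₁.length ≤ 2 ∧ T₂.length ≤ 2)

lemma Concl.symm {T₁ T₂ : List (Fin 3)} (h : Concl T₁ T₂) : Concl T₂ T₁ := by
  rcases h with h | ⟨U, h1, h2⟩ | ⟨h1, h2⟩
  · exact Or.inl h.symm
  · exact Or.inr (Or.inl ⟨U, h2, h1⟩)
  · exact Or.inr (Or.inr ⟨h2, h1⟩)

lemma list_cases3 (L : List (Fin 3)) :
    L = [] ∨ (∃ a, L = [a]) ∨ (∃ a b, L = [a, b]) ∨ ∃ M a b c, L = M ++ [a, b, c] := by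
  induction L with
  | nil => exact Or.inl rfl
  | cons x L ih =>
    rcases ih with rfl | ⟨a, rfl⟩ | ⟨a, b, rfl⟩ | ⟨M, a, b, c, rfl⟩
    · exact Or.inr (Or.inl ⟨x, rfl⟩)
    · exact Or.inr (Or.inr (Or.inl ⟨x, a, rfl⟩))
    · exact Or.inr (Or.inr (Or.inr ⟨[], x, a, b, rfl⟩))
    · exact Or.inr (Or.inr (Or.inr ⟨x :: M, a, b, c, rfl⟩))

/-- Case c2 / c2. -/
lemma D22 {B B' : List (Fin 3)} {p q r p' q' r' : Fin 3}
    (heq : p :: q :: r :: B = p' :: q' :: r' :: B') : Concl B B' := by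
  simp at heq; exact Or.inl heq.2.2.2

/-- Case c2 / c3. -/
lemma D23 {B A₂ : List (Fin 3)} {p q r p' q' r' : Fin 3}
    (hpq : p ≠ q) (hqr : q ≠ r) (hpr : p ≠ r)
    (hpq' : p' ≠ q') (hqr' : q' ≠ r') (hpr' : p' ≠ r')
    (heq : p :: q :: r :: B = A₂ ++ [p', q', r']) : Concl B A₂ := by
  rcases A₂ with _ | ⟨a, _ | ⟨b, _ | ⟨c, A'⟩⟩⟩
  · simp at heq
    obtain ⟨rfl, rfl, rfl, rfl⟩ := heq
    exact Or.inl rfl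
  · simp at heq
    obtain ⟨rfl, rfl, rfl, rfl⟩ := heq
    exact Or.inr (Or.inr ⟨by simp, by simp⟩)
  · simp at heq
    obtain ⟨rfl, rfl, rfl, rfl⟩ := heq
    exact Or.inr (Or.inr ⟨by simp, by simp⟩)
  · simp at heq
    obtain ⟨rfl, rfl, rfl, rfl⟩ := heq
    exact Or.inr (Or.inl ⟨A', Contract.c3 A' p' q' r' hpq' hqr' hpr',
      Contract.c2 p q r A' hpq hqr hpr⟩)



/-- Case c1 / c2. -/
lemma D12 {A B B' : List (Fin 3)} {x p q p' q' r' : Fin 3}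
    (hS : IsColoringString (A ++ x :: p :: q :: x :: B))
    (hpq' : p' ≠ q') (hqr' : q' ≠ r') (hpr' : p' ≠ r')
    (heq : A ++ x :: p :: q :: x :: B = p' :: q' :: r' :: B') :
    Concl (A ++ x :: B) B' := by
  obtain ⟨hxp, hpq, hqx⟩ := occ_ne hS
  rcases A with _ | ⟨a, _ | ⟨b, _ | ⟨c, A'⟩⟩⟩
  · simp at heq
    obtain ⟨rfl, rfl, rfl, rfl⟩ := heq
    exact Or.inl (by simp)
  · simp at heq
    obtain ⟨rfl, rfl, rfl, rfl⟩ := heq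
    have : a = q := fin3_pigeon hxp hpq' hpr' hqx (Ne.symm hpq)
    subst this
    exact Or.inl (by simp)
  · simp at heq
    obtain ⟨rfl, rfl, rfl, rfl⟩ := heq
    exact Or.inr (Or.inl ⟨B, Contract.c2 a b x B hpq' hqr' hpr',
      Contract.c2 p q x B hpq hqx (Ne.symm hxp)⟩)
  · simp at heq
    obtain ⟨rfl, rfl, rfl, rfl⟩ := heq
    exact Or.inr (Or.inl ⟨A' ++ x :: B, Contract.c2 a b c (A' ++ x :: B) hpq' hqr' hpr',
      Contract.c1 A' B x p q⟩)

/-- Case c1 / c3. -/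
lemma D13 {A B A₂ : List (Fin 3)} {x p q p' q' r' : Fin 3}
    (hS : IsColoringString (A ++ x :: p :: q :: x :: B))
    (hpq' : p' ≠ q') (hqr' : q' ≠ r') (hpr' : p' ≠ r')
    (heq : A ++ x :: p :: q :: x :: B = A₂ ++ [p', q', r']) :
    Concl (A ++ x :: B) A₂ := by
  obtain ⟨hxp, hpq, hqx⟩ := occ_ne hS
  rcases list_cases3 B with rfl | ⟨a, rfl⟩ | ⟨a, b, rfl⟩ | ⟨M, a, b, c, rfl⟩
  · have heq' : (A ++ [x]) ++ [p, q, x] = A₂ ++ [p', q', r'] := by simpa using heq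
    obtain ⟨h1, h2⟩ := List.append_inj' heq' rfl
    simp at h2
    obtain ⟨rfl, rfl, rfl⟩ := h2
    rw [← h1]
    exact Or.inl (by simp)
  · have heq' : (A ++ [x, p]) ++ [q, x, a] = A₂ ++ [p', q', r'] := by simpa using heq
    obtain ⟨h1, h2⟩ := List.append_inj' heq' rfl
    simp at h2
    obtain ⟨rfl, rfl, rfl⟩ := h2
    rw [← h1]
    have : a = p := fin3_pigeon hqx (Ne.symm hpr') (Ne.symm hqr') hpq (Ne.symm hxp)
    subst this
    exact Or.inl (by simp)
  · have heq' : (A ++ [x, p, q]) ++ [x, a, b] = A₂ ++ [p', q', r'] := by simpa using heq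
    obtain ⟨h1, h2⟩ := List.append_inj' heq' rfl
    simp at h2
    obtain ⟨rfl, rfl, rfl⟩ := h2
    rw [← h1]
    refine Or.inr (Or.inl ⟨A, ?_, ?_⟩)
    · have := Contract.c3 A x a b hpq' hqr' hpr'
      simpa using this
    · have := Contract.c3 A x p q hxp hpq (Ne.symm hqx)
      simpa using this
  · have heq' : (A ++ x :: p :: q :: x :: M) ++ [a, b, c] = A₂ ++ [p', q', r'] := by
      simpa using heq
    obtain ⟨h1, h2⟩ := List.append_inj' heq' rfl
    simp at h2
    obtain ⟨rfl, rfl, rfl⟩ := h2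
    rw [← h1]
    refine Or.inr (Or.inl ⟨A ++ x :: M, ?_, ?_⟩)
    · have := Contract.c3 (A ++ x :: M) a b c hpq' hqr' hpr'
      simpa using this
    · exact Contract.c1 A M x p q

/-- Case c1 / c1, when the second occurrence starts at or after the first. -/
lemma D11aux {A₁ B₁ B₂ C : List (Fin 3)} {x₁ p₁ q₁ x₂ p₂ q₂ : Fin 3}
    (hS : IsColoringString (A₁ ++ x₁ :: p₁ :: q₁ :: x₁ :: B₁))
    (heq : x₁ :: p₁ :: q₁ :: x₁ :: B₁ = C ++ x₂ :: p₂ :: q₂ :: x₂ :: B₂) :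
    Concl (A₁ ++ x₁ :: B₁) ((A₁ ++ C) ++ x₂ :: B₂) := by
  obtain ⟨hxp, hpq, hqx⟩ := occ_ne hS
  have hS2 : IsColoringString ((A₁ ++ C) ++ x₂ :: p₂ :: q₂ :: x₂ :: B₂) := by
    rw [heq] at hS
    rw [List.append_assoc]
    exact hS
  obtain ⟨hxp2, hpq2, hqx2⟩ := occ_ne hS2
  rcases C with _ | ⟨c, _ | ⟨d, _ | ⟨e, _ | ⟨f, C'⟩⟩⟩⟩ <;> simp at heq
  · obtain ⟨rfl, rfl, rfl, -, rfl⟩ := heq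
    exact Or.inl (by simp)
  · obtain ⟨rfl, rfl, rfl, rfl, rfl⟩ := heq
    exact Or.inl (by simp)
  · obtain ⟨rfl, rfl, rfl, rfl, rfl⟩ := heq
    have : q₂ = p₁ :=
      fin3_pigeon (Ne.symm hqx) (Ne.symm hpq2) hqx2 (Ne.symm hxp) hpq
    subst this
    exact Or.inl (by simp)
  · obtain ⟨rfl, rfl, rfl, rfl, rfl⟩ := heq
    refine Or.inr (Or.inl ⟨A₁ ++ x₁ :: B₂, Contract.c1 A₁ B₂ x₁ p₂ q₂, ?_⟩)
    have := Contract.c1 A₁ B₂ x₁ p₁ q₁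
    simpa using this
  · obtain ⟨rfl, rfl, rfl, rfl, rfl⟩ := heq
    refine Or.inr (Or.inl ⟨A₁ ++ x₁ :: (C' ++ x₂ :: B₂), ?_, ?_⟩)
    · have := Contract.c1 (A₁ ++ x₁ :: C') B₂ x₂ p₂ q₂
      simpa using this
    · have := Contract.c1 A₁ (C' ++ x₂ :: B₂) x₁ p₁ q₁
      simpa using this

/-- Case c1 / c1. -/
lemma D11 {A₁ B₁ A₂ B₂ : List (Fin 3)} {x₁ p₁ q₁ x₂ p₂ q₂ : Fin 3}
    (hS : IsColoringString (A₁ ++ x₁ :: p₁ :: q₁ :: x₁ :: B₁))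
    (heq : A₁ ++ x₁ :: p₁ :: q₁ :: x₁ :: B₁ = A₂ ++ x₂ :: p₂ :: q₂ :: x₂ :: B₂) :
    Concl (A₁ ++ x₁ :: B₁) (A₂ ++ x₂ :: B₂) := by
  rcases List.append_eq_append_iff.1 heq with ⟨C, rfl, hC⟩ | ⟨C, rfl, hC⟩
  · exact D11aux hS hC
  · have hS' : IsColoringString (A₂ ++ x₂ :: p₂ :: q₂ :: x₂ :: B₂) := heq ▸ hS
    exact (D11aux hS' hC).symm

lemma diamond {S T₁ T₂ : List (Fin 3)} (hS : IsColoringString S)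
    (h1 : Contract S T₁) (h2 : Contract S T₂) : Concl T₁ T₂ := by
  rcases contract_inv h1 with ⟨A₁, B₁, x₁, p₁, q₁, rfl, rfl⟩ |
      ⟨p₁, q₁, r₁, B₁, d1, d2, d3, rfl, rfl⟩ | ⟨A₁, p₁, q₁, r₁, d1, d2, d3, rfl, rfl⟩ <;>
    rcases contract_inv h2 with ⟨A₂, B₂, x₂, p₂, q₂, heq, rfl⟩ |
      ⟨p₂, q₂, r₂, B₂, e1, e2, e3, heq, rfl⟩ | ⟨A₂, p₂, q₂, r₂, e1, e2, e3, heq, rfl⟩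
  · exact D11 hS heq
  · exact D12 hS e1 e2 e3 heq
  · exact D13 hS e1 e2 e3 heq
  · have hS' : IsColoringString (A₂ ++ x₂ :: p₂ :: q₂ :: x₂ :: B₂) := heq ▸ hS
    exact (D12 hS' d1 d2 d3 heq.symm).symm
  · exact D22 heq
  · exact D23 d1 d2 d3 e1 e2 e3 heq
  · have hS' : IsColoringString (A₂ ++ x₂ :: p₂ :: q₂ :: x₂ :: B₂) := heq ▸ hS
    exact (D13 hS' d1 d2 d3 heq.symm).symm
  · exact (D23 e1 e2 e3 d1 d2 d3 heq.symm).symm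
  · obtain ⟨h1, -⟩ := List.append_inj' heq rfl
    exact Or.inl h1

lemma key : ∀ n (S T₁ T₂ : List (Fin 3)), S.length = n → IsColoringString S →
    ContractsTo S T₁ → IsContractNormal T₁ → ContractsTo S T₂ → IsContractNormal T₂ →
    T₁ = T₂ ∨ (T₁.length ≤ 2 ∧ T₂.length ≤ 2) := by
  intro n
  induction n using Nat.strong_induction_on with
  | _ n ih =>
    intro S T₁ T₂ hn hS h1 h1n h2 h2n
    rcases h1.cases_head with rfl | ⟨S₁, hs1, h1'⟩
    · rcases h2.cases_head with rfl | ⟨c, hc, _⟩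
      · exact Or.inl rfl
      · exact absurd hc (h1n c)
    · rcases h2.cases_head with rfl | ⟨S₂, hs2, h2'⟩
      · exact absurd hs1 (h2n S₁)
      · have hl1 := contract_length hs1
        have hl2 := contract_length hs2
        have hc1 := contract_coloring hs1 hS
        have hc2 := contract_coloring hs2 hS
        rcases diamond hS hs1 hs2 with rfl | ⟨U, hu1, hu2⟩ | ⟨l1, l2⟩
        · exact ih S₁.length (by omega) S₁ T₁ T₂ rfl hc1 h1' h1n h2' h2n
        · obtain ⟨W, hW, hWn⟩ := exists_normal U
          have r1 := ih S₁.length (by omega) S₁ T₁ W rfl hc1 h1' h1n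
            (Relation.ReflTransGen.head hu1 hW) hWn
          have r2 := ih S₂.length (by omega) S₂ T₂ W rfl hc2 h2' h2n
            (Relation.ReflTransGen.head hu2 hW) hWn
          rcases r1 with rfl | ⟨a, b⟩ <;> rcases r2 with h | ⟨c, d⟩
          · exact Or.inl h.symm
          · exact Or.inr ⟨d, c⟩
          · subst h; exact Or.inr ⟨a, b⟩
          · exact Or.inr ⟨a, c⟩
        · have e1 := normal_reach h1' (normal_of_short l1)
          have e2 := normal_reach h2' (normal_of_short l2)
          subst e1; subst e2
          exact Or.inr ⟨l1, l2⟩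


/-- the contraction rewriting is confluent, so `inv` is
well-defined: if a coloring string `S` reduces by contractions to strings `T₁`
and `T₂` to which no contraction applies, then `T₁ = T₂` or both have length at
most 2 (in which case both give `inv S = NIL`). -/
theorem stmt_7 (S T₁ T₂ : List (Fin 3)) (hS : IsColoringString S)
    (h1 : ContractsTo S T₁) (h1n : IsContractNormal T₁)
    (h2 : ContractsTo S T₂) (h2n : IsContractNormal T₂) :
    T₁ = T₂ ∨ (T₁.length ≤ 2 ∧ T₂.length ≤ 2) :=
  key S.length S T₁ T₂ rfl hS h1 h1n h2 h2n
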